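/- Let H be a complex Hilbert space with dim H ≥ 3 and let φ : B_s(H) → B_s(H) be a surjective map such that for all A, B, C ∈ B_s(H), A − B ↔_q C if and only if φ(A) − φ(B) ↔_q φ(C). Then for every A ∈ B_s(H), A^# = A^c if and only if φ(A)^# = φ(A)^c. -/
import Mathlib


noncomputable section

variable {H : Type*} [NormedAddCommGroup H] [InnerProductSpace ℂ H] [CompleteSpace H]

/-- `A ↔_q B`: the self-adjoint operators `A` and `B` quasi-commute, i.e.
they either commute or anti-commute. -/
def CommQ (A B : selfAdjoint (H →L[ℂ] H)) : Prop :=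
  (A : H →L[ℂ] H) * (B : H →L[ℂ] H) = (B : H →L[ℂ] H) * (A : H →L[ℂ] H) ∨
  (A : H →L[ℂ] H) * (B : H →L[ℂ] H) + (B : H →L[ℂ] H) * (A : H →L[ℂ] H) = 0

/-- `A ↔_c B`: the self-adjoint operators `A` and `B` commute. -/
def CommC (A B : selfAdjoint (H →L[ℂ] H)) : Prop :=
  (A : H →L[ℂ] H) * (B : H →L[ℂ] H) = (B : H →L[ℂ] H) * (A : H →L[ℂ] H)

lemma selfAdjoint_sq_eq_zero (A : selfAdjoint (H →L[ℂ] H))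
    (h : (A : H →L[ℂ] H) * (A : H →L[ℂ] H) = 0) : (A : H →L[ℂ] H) = 0 := by
  have hs : star (A : H →L[ℂ] H) = (A : H →L[ℂ] H) := A.prop
  have hn : ‖(A : H →L[ℂ] H)‖ * ‖(A : H →L[ℂ] H)‖ = 0 := by
    rw [← CStarRing.norm_star_mul_self, hs, h, norm_zero]
  have : ‖(A : H →L[ℂ] H)‖ = 0 := by nlinarith [norm_nonneg (A : H →L[ℂ] H)]
  exact norm_eq_zero.mp this

/-- `A^# = A^c` is equivalent to `A^#` being closed under differences. -/
lemma key_iff (A : selfAdjoint (H →L[ℂ] H)) :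
    ({X : selfAdjoint (H →L[ℂ] H) | CommQ X A} = {X | CommC X A}) ↔
    (∀ X Y : selfAdjoint (H →L[ℂ] H), CommQ X A → CommQ Y A → CommQ (X - Y) A) := by
  have hset : ({X : selfAdjoint (H →L[ℂ] H) | CommQ X A} = {X | CommC X A}) ↔
      ∀ X, CommQ X A → CommC X A := by
    constructor
    · intro h X hX
      have : X ∈ {X : selfAdjoint (H →L[ℂ] H) | CommQ X A} := hX
      rw [h] at this; exact this
    · intro h
      ext X
      exact ⟨fun hX => h X hX, fun hX => Or.inl hX⟩
  rw [hset]
  constructor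
  · intro h X Y hX hY
    have hX' := h X hX
    have hY' := h Y hY
    left
    have : ((X - Y : selfAdjoint (H →L[ℂ] H)) : H →L[ℂ] H)
        = (X : H →L[ℂ] H) - (Y : H →L[ℂ] H) := rfl
    rw [this, sub_mul, mul_sub, hX', hY']
  · intro h X hX
    rcases hX with hc | ha
    · exact hc
    · -- X anticommutes with A; use closure with Y = A
      have hAA : CommQ A A := Or.inl rfl
      have hXA := h X A (Or.inr ha) hAA
      have hcoe : ((X - A : selfAdjoint (H →L[ℂ] H)) : H →L[ℂ] H)
          = (X : H →L[ℂ] H) - (A : H →L[ℂ] H) := rfl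
      unfold CommQ at hXA
      rw [hcoe, sub_mul, mul_sub] at hXA
      unfold CommC
      rcases hXA with hc | ha'
      · -- X*A - A*A = A*X - A*A  ⟹  X*A = A*X
        have hc' : (X : H →L[ℂ] H) * A = (A : H →L[ℂ] H) * X := by
          have := congrArg (· + (A : H →L[ℂ] H) * A) hc
          simpa using this
        exact hc'
      · -- (X*A + A*X) - 2 A*A = 0  ⟹  A*A = 0 ⟹ A = 0
        have hA2 : (A : H →L[ℂ] H) * (A : H →L[ℂ] H) = 0 := by
          have h2 : (2 : ℂ) • ((A : H →L[ℂ] H) * (A : H →L[ℂ] H)) = 0 := by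
            have : (X : H →L[ℂ] H) * A - A * A + ((A : H →L[ℂ] H) * X - A * A) = 0 := ha'
            have hrw : (X : H →L[ℂ] H) * A - A * A + ((A : H →L[ℂ] H) * X - A * A)
                = ((X : H →L[ℂ] H) * A + (A : H →L[ℂ] H) * X)
                  - (2 : ℂ) • ((A : H →L[ℂ] H) * (A : H →L[ℂ] H)) := by
              rw [two_smul]; abel
            rw [hrw, ha, zero_sub, neg_eq_zero] at this
            exact this
          have := smul_eq_zero.mp h2
          rcases this with h' | h'
          · exact absurd h' two_ne_zero
          · exact h'
        have hA0 := selfAdjoint_sq_eq_zero A hA2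
        rw [hA0, mul_zero, zero_mul]
  
theorem stmt17
    (hdim : 3 ≤ Module.rank ℂ H)
    (φ : selfAdjoint (H →L[ℂ] H) → selfAdjoint (H →L[ℂ] H))
    (hsurj : Function.Surjective φ)
    (hpres : ∀ A B C : selfAdjoint (H →L[ℂ] H),
      CommQ (A - B) C ↔ CommQ (φ A - φ B) (φ C)) :
    ∀ A : selfAdjoint (H →L[ℂ] H),
      {X : selfAdjoint (H →L[ℂ] H) | CommQ X A} = {X | CommC X A} ↔
      {X : selfAdjoint (H →L[ℂ] H) | CommQ X (φ A)} = {X | CommC X (φ A)} := by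
  intro A
  rw [key_iff, key_iff]
  constructor
  · -- forward: P(A) → P(φ A)
    intro h X' Y' hX' hY'
    obtain ⟨V₀⟩ : Nonempty (selfAdjoint (H →L[ℂ] H)) := ⟨0⟩
    obtain ⟨U, hU⟩ := hsurj (X' + φ V₀)
    obtain ⟨W, hW⟩ := hsurj (Y' + φ V₀)
    have hX'' : X' = φ U - φ V₀ := by rw [hU]; abel
    have hY'' : Y' = φ W - φ V₀ := by rw [hW]; abel
    have h1 : CommQ (U - V₀) A := (hpres U V₀ A).mpr (hX'' ▸ hX')
    have h2 : CommQ (W - V₀) A := (hpres W V₀ A).mpr (hY'' ▸ hY')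
    have h3 : CommQ (U - W) A := by
      have := h (U - V₀) (W - V₀) h1 h2
      have heq : (U - V₀) - (W - V₀) = U - W := by abel
      rwa [heq] at this
    have h4 : CommQ (φ U - φ W) (φ A) := (hpres U W A).mp h3
    have heq : X' - Y' = φ U - φ W := by rw [hX'', hY'']; abel
    rwa [heq]
  · -- backward: P(φ A) → P(A)
    intro h X Y hX hY
    have hX' : CommQ (φ (X + 0) - φ 0) (φ A) := by
      apply (hpres (X + 0) 0 A).mp
      have : (X + 0 : selfAdjoint (H →L[ℂ] H)) - 0 = X := by abel
      rwa [this]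
    have hY' : CommQ (φ (Y + 0) - φ 0) (φ A) := by
      apply (hpres (Y + 0) 0 A).mp
      have : (Y + 0 : selfAdjoint (H →L[ℂ] H)) - 0 = Y := by abel
      rwa [this]
    have h3 := h _ _ hX' hY'
    have heq : (φ (X + 0) - φ 0) - (φ (Y + 0) - φ 0) = φ (X + 0) - φ (Y + 0) := by abel
    rw [heq] at h3
    have h4 : CommQ ((X + 0) - (Y + 0)) A := (hpres (X + 0) (Y + 0) A).mpr h3
    have heq2 : (X + 0 : selfAdjoint (H →L[ℂ] H)) - (Y + 0) = X - Y := by abel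
    rwa [heq2] at h4
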